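/- Let r, t be integers, s a natural number, and z₁, z₂ complex numbers satisfying |z₁| > |z₂| > |z₁−z₂| > 0. Then both of the series ∑_{l=0}^{∞} (−1)^{s+l} · C(s+t+l+1−r, s) · C(−t−1, l) · z₁^{r−s−t−l−2} · z₂^{l} and ∑_{k=0}^{∞} C(r−1, k) · C(k−t−1, s) · z₂^{r−1−k} · (z₁−z₂)^{k−t−s−1} converge absolutely, and their sums are equal. -/

import Mathlib

set_option maxRecDepth 10000

open Finset


/-- The generalized binomial coefficient `C(n, j) = n(n-1)⋯(n-j+1)/j!`,
regarded as a complex number (equal to `1` when `j = 0`). -/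
noncomputable def cbinom (n : ℤ) (j : ℕ) : ℂ :=
  (∏ i ∈ Finset.range j, ((n : ℂ) - (i : ℂ))) / (Nat.factorial j : ℂ)

lemma descPochhammer_smeval_complex (x : ℂ) (j : ℕ) :
    (descPochhammer ℤ j).smeval x = ∏ i ∈ range j, (x - i) := by
  induction j with
  | zero => simp [descPochhammer_zero]
  | succ n ih =>
    rw [descPochhammer_succ_right, Polynomial.smeval_mul, ih, prod_range_succ]
    congr 1
    simp [Polynomial.smeval_sub, Polynomial.smeval_X, Polynomial.smeval_natCast]

lemma cbinom_eq_choose (n : ℤ) (j : ℕ) : cbinom n j = Ring.choose (n : ℂ) j := by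
  have h := Ring.descPochhammer_eq_factorial_smul_choose (R := ℂ) (n : ℂ) j
  rw [descPochhammer_smeval_complex, nsmul_eq_mul] at h
  rw [cbinom, h]
  field_simp [Nat.factorial_ne_zero]

lemma cbinom_natCast (l i : ℕ) : cbinom (l : ℤ) i = (l.choose i : ℂ) := by
  rw [cbinom_eq_choose]
  push_cast
  rw [Ring.choose_natCast]

lemma cbinom_vandermonde (x y : ℤ) (n : ℕ) :
    cbinom (x + y) n = ∑ j ∈ range (n + 1), cbinom x j * cbinom y (n - j) := by
  simp only [cbinom_eq_choose]
  rw [Int.cast_add, Ring.add_choose_eq _ (Commute.all _ _),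
    Finset.Nat.sum_antidiagonal_eq_sum_range_succ_mk]

lemma cbinom_trinomial (n : ℤ) (i l : ℕ) :
    ((i + l).choose i : ℂ) * cbinom n (i + l) = cbinom n i * cbinom (n - i) l := by
  simp only [cbinom_eq_choose]
  have h := Ring.choose_smul_choose ((n : ℤ) : ℂ) (Nat.le_add_right i l)
  rw [nsmul_eq_mul] at h
  rw [h, Nat.add_sub_cancel_left]
  congr 2
  push_cast
  ring

lemma cbinom_neg (m : ℤ) (k : ℕ) : cbinom ((k : ℤ) - 1 - m) k = (-1 : ℂ) ^ k * cbinom m k := by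
  rw [cbinom, cbinom]
  rw [show ((-1 : ℂ) ^ k * ((∏ i ∈ range k, ((m : ℂ) - i)) / (Nat.factorial k : ℂ)))
      = ((-1 : ℂ) ^ k * ∏ i ∈ range k, ((m : ℂ) - i)) / (Nat.factorial k : ℂ) by ring]
  congr 1
  calc ∏ i ∈ range k, ((((k : ℤ) - 1 - m : ℤ) : ℂ) - i)
      = ∏ i ∈ range k, ((((k : ℤ) - 1 - m : ℤ) : ℂ) - ((k - 1 - i : ℕ) : ℂ)) :=
        (prod_range_reflect (fun i => (((k : ℤ) - 1 - m : ℤ) : ℂ) - i) k).symm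
    _ = ∏ i ∈ range k, ((-1 : ℂ) * ((m : ℂ) - i)) := by
        refine prod_congr rfl fun i hi => ?_
        have hik : i < k := mem_range.mp hi
        have : ((k - 1 - i : ℕ) : ℂ) = (k : ℂ) - 1 - i := by
          have h' : k - 1 - i = k - (1 + i) := by omega
          rw [h', Nat.cast_sub (by omega : 1 + i ≤ k)]
          push_cast
          ring
        rw [this]
        push_cast
        ring
    _ = (-1 : ℂ) ^ k * ∏ i ∈ range k, ((m : ℂ) - i) := by
        rw [prod_mul_distrib, prod_const, card_range]

lemma hasSum_cbinom (m : ℤ) {w : ℂ} (hw : ‖w‖ < 1) :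
    HasSum (fun k : ℕ => cbinom m k * w ^ k) ((1 + w) ^ m) := by
  cases m with
  | ofNat n =>
    have h1 : ∀ k ∉ range (n + 1), cbinom (Int.ofNat n) k * w ^ k = 0 := by
      intro k hk
      rw [show (Int.ofNat n : ℤ) = ((n : ℕ) : ℤ) from rfl, cbinom_natCast,
        Nat.choose_eq_zero_of_lt (by simpa [Nat.lt_succ_iff] using hk)]
      simp
    have h2 := hasSum_sum_of_ne_finset_zero (L := SummationFilter.unconditional ℕ) h1
    have h3 : ∑ k ∈ range (n + 1), cbinom (Int.ofNat n) k * w ^ k = (1 + w) ^ (Int.ofNat n) := by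
      rw [show (Int.ofNat n : ℤ) = ((n : ℕ) : ℤ) from rfl, zpow_natCast, add_comm 1 w, add_pow]
      refine sum_congr rfl fun k hk => ?_
      rw [cbinom_natCast]
      ring
    rwa [h3] at h2
  | negSucc n =>
    have key : ∀ k : ℕ, cbinom (Int.negSucc n) k * w ^ k = ((k + n).choose n : ℂ) * (-w) ^ k := by
      intro k
      have h := cbinom_neg (Int.negSucc n) k
      rw [show (k : ℤ) - 1 - Int.negSucc n = ((k + n : ℕ) : ℤ) by
        rw [Int.negSucc_eq]; push_cast; ring] at h
      rw [cbinom_natCast] at h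
      have hc : (k + n).choose k = (k + n).choose n := by
        rw [← Nat.choose_symm (Nat.le_add_left n k)]
        congr 1
        omega
      have hsq : ((-1 : ℂ) ^ k) * ((-1 : ℂ) ^ k) = 1 := by
        rw [← pow_add, Even.neg_one_pow ⟨k, rfl⟩]
      have hcb : cbinom (Int.negSucc n) k = (-1 : ℂ) ^ k * ((k + n).choose n : ℂ) := by
        calc cbinom (Int.negSucc n) k = (((-1 : ℂ) ^ k) * ((-1 : ℂ) ^ k)) * cbinom (Int.negSucc n) k := by
              rw [hsq, one_mul]
          _ = (-1 : ℂ) ^ k * ((k + n).choose k : ℂ) := by rw [mul_assoc, ← h]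
          _ = (-1 : ℂ) ^ k * ((k + n).choose n : ℂ) := by rw [hc]
      rw [hcb, neg_pow]
      ring
    have H := hasSum_choose_mul_geometric_of_norm_lt_one (𝕜 := ℂ) n (r := -w)
      (by simpa using hw)
    rw [sub_neg_eq_add] at H
    have hv : (1 : ℂ) / (1 + w) ^ (n + 1) = (1 + w) ^ (Int.negSucc n) := by
      rw [zpow_negSucc, one_div]
    rw [hv] at H
    exact (funext key : (fun k : ℕ => cbinom (Int.negSucc n) k * w ^ k) = _) ▸ H

lemma hasSum_shift {f : ℕ → ℂ} (i : ℕ) (h0 : ∀ l, l < i → f l = 0) {a : ℂ}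
    (h : HasSum (fun l => f (i + l)) a) : HasSum f a := by
  have h' : HasSum (fun l => f (l + i)) a := by simpa [add_comm] using h
  rw [hasSum_nat_add_iff i] at h'
  simpa [Finset.sum_eq_zero fun l hl => h0 l (mem_range.mp hl)] using h'

lemma hasSum_block (m : ℤ) {w : ℂ} (C : ℂ) (hw : ‖w‖ < 1) (f : ℕ → ℂ) (i : ℕ)
    (h0 : ∀ l, l < i → f l = 0) (hf : ∀ l, f (i + l) = C * (cbinom m l * w ^ l)) :
    HasSum f (C * (1 + w) ^ m) :=
  hasSum_shift i h0 (by simpa only [hf] using ((hasSum_cbinom m hw).mul_left C))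

lemma sum_range_shift {h : ℕ → ℂ} {a n : ℕ} (ha : a ≤ n) (h0 : ∀ j, j < a → h j = 0) :
    ∑ j ∈ range (n + 1), h j = ∑ j ∈ range (n + 1 - a), h (a + j) := by
  calc ∑ j ∈ range (n + 1), h j
      = ∑ j ∈ Ico 0 a, h j + ∑ j ∈ Ico a (n + 1), h j := by
        rw [Finset.sum_Ico_consecutive _ (Nat.zero_le a) (by omega : a ≤ n + 1), ← range_eq_Ico]
    _ = ∑ j ∈ Ico a (n + 1), h j := by
        rw [Finset.sum_eq_zero fun j hj => h0 j (mem_Ico.mp hj).2, zero_add]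
    _ = ∑ j ∈ range (n + 1 - a), h (a + j) := by rw [Finset.sum_Ico_eq_sum_range]

lemma fin_identity (r t : ℤ) (s : ℕ) (u v : ℂ) :
    ∑ j ∈ range (s + 1), (-1 : ℂ) ^ (s + j) * cbinom ((s : ℤ) + t + 1 - r) (s - j) *
        cbinom (-t - 1) j * u ^ j * v ^ (s - j)
    = ∑ j ∈ range (s + 1), cbinom (-t - 1) j * cbinom (r - 1) (s - j) * (u + v) ^ j *
        v ^ (s - j) := by
  have hLHS : ∀ j ∈ range (s + 1),
      (-1 : ℂ) ^ (s + j) * cbinom ((s : ℤ) + t + 1 - r) (s - j) * cbinom (-t - 1) j * u ^ j *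
        v ^ (s - j)
      = cbinom (-t - 1) j * cbinom (r - t - 2 - j) (s - j) * u ^ j * v ^ (s - j) := by
    intro j hj
    have hle : j ≤ s := by simpa [Nat.lt_succ_iff] using mem_range.mp hj
    have h := cbinom_neg ((s : ℤ) + t + 1 - r) (s - j)
    rw [show ((s - j : ℕ) : ℤ) - 1 - ((s : ℤ) + t + 1 - r) = r - t - 2 - j by
      rw [Nat.cast_sub hle]; ring] at h
    have hpar : (-1 : ℂ) ^ (s + j) = (-1 : ℂ) ^ (s - j) := by
      rw [show s + j = (s - j) + 2 * j by omega, pow_add, pow_mul]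
      simp
    rw [h, hpar]
    ring
  rw [Finset.sum_congr rfl hLHS]
  have hexp : ∀ j ∈ range (s + 1),
      cbinom (-t - 1) j * cbinom (r - 1) (s - j) * (u + v) ^ j * v ^ (s - j)
      = ∑ a ∈ range (s + 1), cbinom (-t - 1) j * cbinom (r - 1) (s - j) *
          ((j.choose a : ℂ) * u ^ a * v ^ (j - a)) * v ^ (s - j) := by
    intro j hj
    have hle : j ≤ s := by simpa [Nat.lt_succ_iff] using mem_range.mp hj
    have hpow : (u + v) ^ j = ∑ a ∈ range (s + 1), (j.choose a : ℂ) * u ^ a * v ^ (j - a) := by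
      rw [add_pow,
        ← Finset.sum_subset (Finset.range_subset_range.mpr (by omega : j + 1 ≤ s + 1))
          (fun a _ hna => by
            rw [Nat.choose_eq_zero_of_lt (by simp only [mem_range, Nat.lt_succ_iff] at hna ⊢; omega)]
            simp)]
      exact Finset.sum_congr rfl fun a _ => by ring
    rw [hpow, Finset.mul_sum, Finset.sum_mul]
  rw [Finset.sum_congr rfl hexp, Finset.sum_comm]
  refine Finset.sum_congr rfl fun a ha => ?_
  have hale : a ≤ s := by simpa [Nat.lt_succ_iff] using mem_range.mp ha
  rw [sum_range_shift hale (fun j hj => by rw [Nat.choose_eq_zero_of_lt hj]; simp)]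
  have hterm : ∀ j' ∈ range (s + 1 - a),
      cbinom (-t - 1) (a + j') * cbinom (r - 1) (s - (a + j')) *
          (((a + j').choose a : ℂ) * u ^ a * v ^ ((a + j') - a)) * v ^ (s - (a + j'))
      = (cbinom (-t - 1) a * u ^ a * v ^ (s - a)) *
          (cbinom ((-t - 1) - a) j' * cbinom (r - 1) ((s - a) - j')) := by
    intro j' hj'
    have hj'le : j' ≤ s - a := by
      have := mem_range.mp hj'
      omega
    have htri := cbinom_trinomial (-t - 1) a j'
    have hv : v ^ (s - a) = v ^ j' * v ^ ((s - a) - j') := by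
      rw [← pow_add]
      congr 1
      omega
    rw [show (a + j') - a = j' by omega, show s - (a + j') = (s - a) - j' by omega, hv]
    linear_combination (cbinom (r - 1) ((s - a) - j') * u ^ a * v ^ j' * v ^ ((s - a) - j')) * htri
  rw [Finset.sum_congr rfl hterm, ← Finset.mul_sum]
  have hvdm := cbinom_vandermonde ((-t - 1) - a) (r - 1) (s - a)
  rw [show s + 1 - a = (s - a) + 1 by omega, ← hvdm,
    show ((-t - 1) - (a : ℤ)) + (r - 1) = r - t - 2 - a by ring]
  ring

theorem delta_identity_14_9_coefficients_agree (r t : ℤ) (s : ℕ) (z₁ z₂ : ℂ)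
    (h₁ : ‖z₂‖ < ‖z₁‖)
    (h₂ : ‖z₁ - z₂‖ < ‖z₂‖)
    (h₃ : 0 < ‖z₁ - z₂‖) :
    Summable (fun l : ℕ => ‖(-1 : ℂ) ^ (s + l) * cbinom ((s : ℤ) + t + (l : ℤ) + 1 - r) s *
        cbinom (-t - 1) l * z₁ ^ (r - (s : ℤ) - t - (l : ℤ) - 2) * z₂ ^ l‖) ∧
    Summable (fun k : ℕ => ‖cbinom (r - 1) k * cbinom ((k : ℤ) - t - 1) s *
        z₂ ^ (r - 1 - (k : ℤ)) * (z₁ - z₂) ^ ((k : ℤ) - t - (s : ℤ) - 1)‖) ∧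
    ∑' l : ℕ, (-1 : ℂ) ^ (s + l) * cbinom ((s : ℤ) + t + (l : ℤ) + 1 - r) s *
        cbinom (-t - 1) l * z₁ ^ (r - (s : ℤ) - t - (l : ℤ) - 2) * z₂ ^ l
      = ∑' k : ℕ, cbinom (r - 1) k * cbinom ((k : ℤ) - t - 1) s *
        z₂ ^ (r - 1 - (k : ℤ)) * (z₁ - z₂) ^ ((k : ℤ) - t - (s : ℤ) - 1) := by
  have habs1 : 0 < ‖z₁‖ := lt_trans (lt_trans h₃ h₂) h₁
  have habs2 : 0 < ‖z₂‖ := lt_trans h₃ h₂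
  have hz1 : z₁ ≠ 0 := by intro h; rw [h] at habs1; simp at habs1
  have hz2 : z₂ ≠ 0 := by intro h; rw [h] at habs2; simp at habs2
  have hz12 : z₁ - z₂ ≠ 0 := by intro h; rw [h] at h₃; simp at h₃
  have hw : ‖-z₂ / z₁‖ < 1 := by
    rw [norm_div, norm_neg, div_lt_one habs1]
    exact h₁
  have hv : ‖(z₁ - z₂) / z₂‖ < 1 := by
    rw [norm_div, div_lt_one habs2]
    exact h₂
  -- Left-hand side: split by Vandermonde and sum each piece
  have hF : ∀ j ∈ range (s + 1), HasSum
      (fun l : ℕ => (-1 : ℂ) ^ (s + l) * cbinom ((s : ℤ) + t + 1 - r) j *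
        (l.choose (s - j) : ℂ) * cbinom (-t - 1) l * z₁ ^ (r - (s : ℤ) - t - (l : ℤ) - 2) *
        z₂ ^ l)
      ((-1 : ℂ) ^ (s + (s - j)) * cbinom ((s : ℤ) + t + 1 - r) j * cbinom (-t - 1) (s - j) *
        z₁ ^ (r - (s : ℤ) - 1) * z₂ ^ (s - j) * (z₁ - z₂) ^ (-t - 1 - ((s - j : ℕ) : ℤ))) := by
    intro j hj
    set i := s - j with hidef
    have h0 : ∀ l, l < i → (-1 : ℂ) ^ (s + l) * cbinom ((s : ℤ) + t + 1 - r) j *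
        (l.choose i : ℂ) * cbinom (-t - 1) l * z₁ ^ (r - (s : ℤ) - t - (l : ℤ) - 2) *
        z₂ ^ l = 0 := by
      intro l hl
      rw [Nat.choose_eq_zero_of_lt hl]
      simp
    have hf : ∀ l : ℕ, (-1 : ℂ) ^ (s + (i + l)) * cbinom ((s : ℤ) + t + 1 - r) j *
        ((i + l).choose i : ℂ) * cbinom (-t - 1) (i + l) *
        z₁ ^ (r - (s : ℤ) - t - ((i + l : ℕ) : ℤ) - 2) * z₂ ^ (i + l)
        = ((-1 : ℂ) ^ (s + i) * cbinom ((s : ℤ) + t + 1 - r) j * cbinom (-t - 1) i *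
            z₁ ^ (r - (s : ℤ) - t - (i : ℤ) - 2) * z₂ ^ i) *
          (cbinom (-t - 1 - (i : ℤ)) l * (-z₂ / z₁) ^ l) := by
      intro l
      have htri := cbinom_trinomial (-t - 1) i l
      have hzpow : z₁ ^ (r - (s : ℤ) - t - ((i + l : ℕ) : ℤ) - 2)
          = z₁ ^ (r - (s : ℤ) - t - (i : ℤ) - 2) * (z₁ ^ l)⁻¹ := by
        rw [show r - (s : ℤ) - t - ((i + l : ℕ) : ℤ) - 2
            = (r - (s : ℤ) - t - (i : ℤ) - 2) + (-(l : ℤ)) by push_cast; ring,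
          zpow_add₀ hz1, zpow_neg, zpow_natCast]
      rw [hzpow, pow_add z₂, show s + (i + l) = (s + i) + l by ring, pow_add,
        neg_div, neg_pow (z₂ / z₁) l, div_pow]
      linear_combination ((-1 : ℂ) ^ (s + i) * (-1 : ℂ) ^ l * cbinom ((s : ℤ) + t + 1 - r) j *
        z₁ ^ (r - (s : ℤ) - t - (i : ℤ) - 2) * (z₁ ^ l)⁻¹ * z₂ ^ i * z₂ ^ l) * htri
    have key := hasSum_block (-t - 1 - (i : ℤ))
      ((-1 : ℂ) ^ (s + i) * cbinom ((s : ℤ) + t + 1 - r) j * cbinom (-t - 1) i *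
        z₁ ^ (r - (s : ℤ) - t - (i : ℤ) - 2) * z₂ ^ i) hw
      (fun l : ℕ => (-1 : ℂ) ^ (s + l) * cbinom ((s : ℤ) + t + 1 - r) j *
        (l.choose i : ℂ) * cbinom (-t - 1) l * z₁ ^ (r - (s : ℤ) - t - (l : ℤ) - 2) *
        z₂ ^ l) i h0 hf
    have hone : (1 : ℂ) + -z₂ / z₁ = (z₁ - z₂) / z₁ := by
      rw [sub_div, div_self hz1]
      ring
    rw [hone, div_zpow] at key
    have hexp : z₁ ^ (r - (s : ℤ) - t - (i : ℤ) - 2) * (z₁ ^ (-t - 1 - (i : ℤ)))⁻¹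
        = z₁ ^ (r - (s : ℤ) - 1) := by
      rw [← zpow_neg, ← zpow_add₀ hz1]
      congr 1
      ring
    convert key using 1
    rw [← hexp]
    ring
  -- Right-hand side: split by Vandermonde and sum each piece
  have hG : ∀ j ∈ range (s + 1), HasSum
      (fun k : ℕ => cbinom (r - 1) k * cbinom (-t - 1) j * (k.choose (s - j) : ℂ) *
        z₂ ^ (r - 1 - (k : ℤ)) * (z₁ - z₂) ^ ((k : ℤ) - t - (s : ℤ) - 1))
      (cbinom (-t - 1) j * cbinom (r - 1) (s - j) * z₁ ^ (r - 1 - ((s - j : ℕ) : ℤ)) *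
        (z₁ - z₂) ^ (((s - j : ℕ) : ℤ) - t - (s : ℤ) - 1)) := by
    intro j hj
    set i := s - j with hidef
    have h0 : ∀ k, k < i → cbinom (r - 1) k * cbinom (-t - 1) j * (k.choose i : ℂ) *
        z₂ ^ (r - 1 - (k : ℤ)) * (z₁ - z₂) ^ ((k : ℤ) - t - (s : ℤ) - 1) = 0 := by
      intro k hk
      rw [Nat.choose_eq_zero_of_lt hk]
      simp
    have hf : ∀ k : ℕ, cbinom (r - 1) (i + k) * cbinom (-t - 1) j * ((i + k).choose i : ℂ) *
        z₂ ^ (r - 1 - ((i + k : ℕ) : ℤ)) * (z₁ - z₂) ^ (((i + k : ℕ) : ℤ) - t - (s : ℤ) - 1)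
        = (cbinom (-t - 1) j * cbinom (r - 1) i * z₂ ^ (r - 1 - (i : ℤ)) *
            (z₁ - z₂) ^ ((i : ℤ) - t - (s : ℤ) - 1)) *
          (cbinom (r - 1 - (i : ℤ)) k * ((z₁ - z₂) / z₂) ^ k) := by
      intro k
      have htri := cbinom_trinomial (r - 1) i k
      have hz2pow : z₂ ^ (r - 1 - ((i + k : ℕ) : ℤ)) = z₂ ^ (r - 1 - (i : ℤ)) * (z₂ ^ k)⁻¹ := by
        rw [show r - 1 - ((i + k : ℕ) : ℤ) = (r - 1 - (i : ℤ)) + (-(k : ℤ)) by push_cast; ring,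
          zpow_add₀ hz2, zpow_neg, zpow_natCast]
      have hz12pow : (z₁ - z₂) ^ (((i + k : ℕ) : ℤ) - t - (s : ℤ) - 1)
          = (z₁ - z₂) ^ ((i : ℤ) - t - (s : ℤ) - 1) * (z₁ - z₂) ^ k := by
        rw [show ((i + k : ℕ) : ℤ) - t - (s : ℤ) - 1
            = ((i : ℤ) - t - (s : ℤ) - 1) + (k : ℤ) by push_cast; ring,
          zpow_add₀ hz12, zpow_natCast]
      rw [hz2pow, hz12pow, div_pow]
      linear_combination (cbinom (-t - 1) j * z₂ ^ (r - 1 - (i : ℤ)) * (z₂ ^ k)⁻¹ *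
        (z₁ - z₂) ^ ((i : ℤ) - t - (s : ℤ) - 1) * (z₁ - z₂) ^ k) * htri
    have key := hasSum_block (r - 1 - (i : ℤ))
      (cbinom (-t - 1) j * cbinom (r - 1) i * z₂ ^ (r - 1 - (i : ℤ)) *
        (z₁ - z₂) ^ ((i : ℤ) - t - (s : ℤ) - 1)) hv
      (fun k : ℕ => cbinom (r - 1) k * cbinom (-t - 1) j * (k.choose i : ℂ) *
        z₂ ^ (r - 1 - (k : ℤ)) * (z₁ - z₂) ^ ((k : ℤ) - t - (s : ℤ) - 1)) i h0 hf
    have hone : (1 : ℂ) + (z₁ - z₂) / z₂ = z₁ / z₂ := by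
      rw [sub_div, div_self hz2]
      ring
    rw [hone, div_zpow] at key
    have hcan : z₂ ^ (r - 1 - (i : ℤ)) * (z₂ ^ (r - 1 - (i : ℤ)))⁻¹ = 1 :=
      mul_inv_cancel₀ (zpow_ne_zero _ hz2)
    convert key using 1
    rw [div_eq_mul_inv]
    linear_combination (-(cbinom (-t - 1) j * cbinom (r - 1) i *
      (z₁ - z₂) ^ ((i : ℤ) - t - (s : ℤ) - 1) * z₁ ^ (r - 1 - (i : ℤ)))) * hcan
  -- Assemble the two sides
  have hLsplit : (fun l : ℕ => (-1 : ℂ) ^ (s + l) * cbinom ((s : ℤ) + t + (l : ℤ) + 1 - r) s *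
      cbinom (-t - 1) l * z₁ ^ (r - (s : ℤ) - t - (l : ℤ) - 2) * z₂ ^ l)
      = fun l : ℕ => ∑ j ∈ range (s + 1), (-1 : ℂ) ^ (s + l) * cbinom ((s : ℤ) + t + 1 - r) j *
        (l.choose (s - j) : ℂ) * cbinom (-t - 1) l * z₁ ^ (r - (s : ℤ) - t - (l : ℤ) - 2) *
        z₂ ^ l := by
    funext l
    rw [show (s : ℤ) + t + (l : ℤ) + 1 - r = ((s : ℤ) + t + 1 - r) + (l : ℤ) by ring,
      cbinom_vandermonde, Finset.mul_sum, Finset.sum_mul, Finset.sum_mul, Finset.sum_mul]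
    refine Finset.sum_congr rfl fun j hj => ?_
    rw [cbinom_natCast]
    ring
  have hRsplit : (fun k : ℕ => cbinom (r - 1) k * cbinom ((k : ℤ) - t - 1) s *
      z₂ ^ (r - 1 - (k : ℤ)) * (z₁ - z₂) ^ ((k : ℤ) - t - (s : ℤ) - 1))
      = fun k : ℕ => ∑ j ∈ range (s + 1), cbinom (r - 1) k * cbinom (-t - 1) j *
        (k.choose (s - j) : ℂ) * z₂ ^ (r - 1 - (k : ℤ)) *
        (z₁ - z₂) ^ ((k : ℤ) - t - (s : ℤ) - 1) := by
    funext k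
    rw [show (k : ℤ) - t - 1 = (-t - 1) + (k : ℤ) by ring,
      cbinom_vandermonde, Finset.mul_sum, Finset.sum_mul, Finset.sum_mul]
    refine Finset.sum_congr rfl fun j hj => ?_
    rw [cbinom_natCast]
    ring
  have HL : HasSum (fun l : ℕ => (-1 : ℂ) ^ (s + l) * cbinom ((s : ℤ) + t + (l : ℤ) + 1 - r) s *
      cbinom (-t - 1) l * z₁ ^ (r - (s : ℤ) - t - (l : ℤ) - 2) * z₂ ^ l)
      (∑ j ∈ range (s + 1), (-1 : ℂ) ^ (s + (s - j)) * cbinom ((s : ℤ) + t + 1 - r) j *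
        cbinom (-t - 1) (s - j) * z₁ ^ (r - (s : ℤ) - 1) * z₂ ^ (s - j) *
        (z₁ - z₂) ^ (-t - 1 - ((s - j : ℕ) : ℤ))) := by
    rw [hLsplit]
    exact hasSum_sum hF
  have HR : HasSum (fun k : ℕ => cbinom (r - 1) k * cbinom ((k : ℤ) - t - 1) s *
      z₂ ^ (r - 1 - (k : ℤ)) * (z₁ - z₂) ^ ((k : ℤ) - t - (s : ℤ) - 1))
      (∑ j ∈ range (s + 1), cbinom (-t - 1) j * cbinom (r - 1) (s - j) *
        z₁ ^ (r - 1 - ((s - j : ℕ) : ℤ)) * (z₁ - z₂) ^ (((s - j : ℕ) : ℤ) - t - (s : ℤ) - 1)) := by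
    rw [hRsplit]
    exact hasSum_sum hG
  refine ⟨summable_norm_iff.mpr HL.summable, summable_norm_iff.mpr HR.summable, ?_⟩
  rw [HL.tsum_eq, HR.tsum_eq]
  -- Reduce to the finite combinatorial identity
  have key := fin_identity r t s z₂ (z₁ - z₂)
  rw [show z₂ + (z₁ - z₂) = z₁ by ring] at key
  have refl1 : ∑ j ∈ range (s + 1), ((-1 : ℂ) ^ (s + (s - j)) * cbinom ((s : ℤ) + t + 1 - r) j *
        cbinom (-t - 1) (s - j) * z₁ ^ (r - (s : ℤ) - 1) * z₂ ^ (s - j) *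
        (z₁ - z₂) ^ (-t - 1 - ((s - j : ℕ) : ℤ)))
      = ∑ j ∈ range (s + 1), ((-1 : ℂ) ^ (s + (s - (s - j))) * cbinom ((s : ℤ) + t + 1 - r) (s - j) *
        cbinom (-t - 1) (s - (s - j)) * z₁ ^ (r - (s : ℤ) - 1) * z₂ ^ (s - (s - j)) *
        (z₁ - z₂) ^ (-t - 1 - ((s - (s - j) : ℕ) : ℤ))) := by
    rw [← Finset.sum_range_reflect]
    refine Finset.sum_congr rfl fun j hj => ?_
    congr 1
  rw [refl1]
  have eL : ∀ j ∈ range (s + 1),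
      (-1 : ℂ) ^ (s + (s - (s - j))) * cbinom ((s : ℤ) + t + 1 - r) (s - j) *
        cbinom (-t - 1) (s - (s - j)) * z₁ ^ (r - (s : ℤ) - 1) * z₂ ^ (s - (s - j)) *
        (z₁ - z₂) ^ (-t - 1 - ((s - (s - j) : ℕ) : ℤ))
      = (z₁ ^ (r - (s : ℤ) - 1) * (z₁ - z₂) ^ (-t - 1 - (s : ℤ))) *
        ((-1 : ℂ) ^ (s + j) * cbinom ((s : ℤ) + t + 1 - r) (s - j) * cbinom (-t - 1) j *
          z₂ ^ j * (z₁ - z₂) ^ (s - j)) := by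
    intro j hj
    have hle : j ≤ s := by simpa [Nat.lt_succ_iff] using mem_range.mp hj
    rw [show s - (s - j) = j by omega,
      show (-t - 1 - ((j : ℕ) : ℤ)) = (-t - 1 - (s : ℤ)) + ((s - j : ℕ) : ℤ) by
        rw [Nat.cast_sub hle]; ring,
      zpow_add₀ hz12, zpow_natCast]
    ring
  rw [Finset.sum_congr rfl eL, ← Finset.mul_sum]
  have eR : ∀ j ∈ range (s + 1),
      cbinom (-t - 1) j * cbinom (r - 1) (s - j) * z₁ ^ (r - 1 - ((s - j : ℕ) : ℤ)) *
        (z₁ - z₂) ^ (((s - j : ℕ) : ℤ) - t - (s : ℤ) - 1)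
      = (z₁ ^ (r - (s : ℤ) - 1) * (z₁ - z₂) ^ (-t - 1 - (s : ℤ))) *
        (cbinom (-t - 1) j * cbinom (r - 1) (s - j) * z₁ ^ j * (z₁ - z₂) ^ (s - j)) := by
    intro j hj
    have hle : j ≤ s := by simpa [Nat.lt_succ_iff] using mem_range.mp hj
    rw [show r - 1 - ((s - j : ℕ) : ℤ) = (r - (s : ℤ) - 1) + (j : ℤ) by
        rw [Nat.cast_sub hle]; ring,
      zpow_add₀ hz1, zpow_natCast,
      show ((s - j : ℕ) : ℤ) - t - (s : ℤ) - 1 = (-t - 1 - (s : ℤ)) + ((s - j : ℕ) : ℤ) by ring,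
      zpow_add₀ hz12, zpow_natCast]
    ring
  rw [Finset.sum_congr rfl eR, ← Finset.mul_sum, key]
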